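/- arXiv:2303.07645 — 7 statements merged into one kernel-verified Lean document; each statement's English description precedes it below -/
import Mathlib

section
/- Every Hamiltonian cubic graph admits a pair-oriented labeling: if G is a finite simple graph with m edges in which every vertex has degree exactly 3 and which contains a Hamiltonian cycle, then there exist an orientation of the edges of G and a bijective labeling of the edges of G by the integers 1, …, m such that every vertex v has two incident edges that are both oriented out of v or both oriented into v and whose labels are consecutive integers (differ by exactly one). -/
section Stmt4Aux
variable {V : Type*}

noncomputable def stmt4OrientFun (f : ℕ → V) (w : V) (n k : ℕ) (e : Sym2 V) : V × V :=
  if k < n then (if k % 2 = 0 then (f k, f (k + 1)) else (f (k + 1), f k))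
  else if k = n then (f 0, w)
  else ((Quot.out e).1, (Quot.out e).2)

lemma stmt4OrientFun_lt {f : ℕ → V} {w : V} {n k : ℕ} {e : Sym2 V} (h : k < n)
    (hp : k % 2 = 0) : stmt4OrientFun f w n k e = (f k, f (k + 1)) := by
  rw [stmt4OrientFun, if_pos h, if_pos hp]

lemma stmt4OrientFun_lt' {f : ℕ → V} {w : V} {n k : ℕ} {e : Sym2 V} (h : k < n)
    (hp : ¬ k % 2 = 0) : stmt4OrientFun f w n k e = (f (k + 1), f k) := by
  rw [stmt4OrientFun, if_pos h, if_neg hp]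

lemma stmt4OrientFun_eq {f : ℕ → V} {w : V} {n : ℕ} {e : Sym2 V} :
    stmt4OrientFun f w n n e = (f 0, w) := by
  rw [stmt4OrientFun, if_neg (lt_irrefl n), if_pos rfl]

lemma stmt4OrientFun_gt {f : ℕ → V} {w : V} {n k : ℕ} {e : Sym2 V} (h : n < k) :
    stmt4OrientFun f w n k e = ((Quot.out e).1, (Quot.out e).2) := by
  rw [stmt4OrientFun, if_neg (by omega), if_neg (by omega)]

lemma stmt4_sym2_out (e : Sym2 V) : e = s((Quot.out e).1, (Quot.out e).2) := by
  exact (Quot.out_eq e).symm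


lemma stmt4_support_getElem {G : SimpleGraph V} {u v : V} (p : G.Walk u v) :
    ∀ (i : ℕ) (h : i < p.support.length), p.support[i] = p.getVert i := by
  induction p with
  | nil =>
    intro i h
    simp only [SimpleGraph.Walk.support_nil, List.length_singleton] at h
    have : i = 0 := by omega
    subst this
    rfl
  | cons hadj q ih =>
    intro i h
    cases i with
    | zero => rfl
    | succ i =>
      simp only [SimpleGraph.Walk.support_cons, List.length_cons] at h
      simp only [SimpleGraph.Walk.support_cons, List.getElem_cons_succ,
        SimpleGraph.Walk.getVert_cons_succ]
      exact ih i (by omega)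

lemma stmt4_aux [Fintype V] [DecidableEq V] (G : SimpleGraph V) [DecidableRel G.Adj]
    (n : ℕ) (f : ℕ → V) (hn3 : 3 ≤ n) (hnev : n % 2 = 0)
    (hadj : ∀ i, i < n → G.Adj (f i) (f (i + 1)))
    (hf0 : f n = f 0)
    (hinj : ∀ i, i < n → ∀ j, j < n → f i = f j → i = j)
    (hsurj : ∀ v : V, ∃ i, i < n ∧ f i = v)
    (w : V) (hw : G.Adj (f 0) w) (hw1 : w ≠ f 1) (hw2 : w ≠ f (n - 1)) :
    ∃ (orient : G.edgeSet → V × V) (label : G.edgeSet ≃ Fin G.edgeFinset.card),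
      (∀ e : G.edgeSet, (e : Sym2 V) = s((orient e).1, (orient e).2)) ∧
      (∀ v : V, ∃ e₁ e₂ : G.edgeSet, e₁ ≠ e₂ ∧
        v ∈ (e₁ : Sym2 V) ∧ v ∈ (e₂ : Sym2 V) ∧
        (((orient e₁).1 = v ∧ (orient e₂).1 = v) ∨
          ((orient e₁).2 = v ∧ (orient e₂).2 = v)) ∧
        ((label e₁ : ℕ) + 1 = (label e₂ : ℕ) ∨ (label e₂ : ℕ) + 1 = (label e₁ : ℕ))) := by
  classical
  have hinj2 : ∀ i, i ≤ n → ∀ j, j ≤ n → f i = f j →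
      i = j ∨ (i = 0 ∧ j = n) ∨ (i = n ∧ j = 0) := by
    intro i hi j hj hij
    rcases eq_or_lt_of_le hi with rfl | hi
    · rcases eq_or_lt_of_le hj with rfl | hj
      · exact Or.inl rfl
      · rw [hf0] at hij
        have := hinj 0 (by omega) j hj hij
        omega
    · rcases eq_or_lt_of_le hj with rfl | hj
      · rw [hf0] at hij
        have := hinj i hi 0 (by omega) hij
        omega
      · exact Or.inl (hinj i hi j hj hij)
  -- cycle edges
  obtain ⟨ecyc, hecyc⟩ : ∃ g : Fin n → G.edgeSet,
      ∀ (i : ℕ) (hi : i < n), (g ⟨i, hi⟩ : Sym2 V) = s(f i, f (i + 1)) :=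
    ⟨fun i => ⟨s(f i.1, f (i.1 + 1)), (G.mem_edgeSet).2 (hadj i.1 i.2)⟩, fun i hi => rfl⟩
  obtain ⟨c0, hc0v⟩ : ∃ c : G.edgeSet, (c : Sym2 V) = s(f 0, w) :=
    ⟨⟨s(f 0, w), (G.mem_edgeSet).2 hw⟩, rfl⟩
  have hecyc_inj : Function.Injective ecyc := by
    intro a b hab
    obtain ⟨i, hi⟩ := a
    obtain ⟨j, hj⟩ := b
    have h : s(f i, f (i + 1)) = s(f j, f (j + 1)) := by
      rw [← hecyc i hi, ← hecyc j hj, hab]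
    rw [Sym2.eq_iff] at h
    apply Fin.ext
    rcases h with ⟨h1, h2⟩ | ⟨h1, h2⟩
    · exact hinj i hi j hj h1
    · have a1 := hinj2 i (le_of_lt hi) (j + 1) (by omega) h1
      have a2 := hinj2 (i + 1) (by omega) j (le_of_lt hj) h2
      omega
  have hc0 : ∀ i : Fin n, ecyc i ≠ c0 := by
    intro a hcon
    obtain ⟨i, hi⟩ := a
    have h : s(f i, f (i + 1)) = s(f 0, w) := by
      rw [← hecyc i hi, ← hc0v, hcon]
    rw [Sym2.eq_iff] at h
    rcases h with ⟨h1, h2⟩ | ⟨h1, h2⟩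
    · have h0 : i = 0 := hinj i hi 0 (by omega) h1
      subst h0
      exact hw1 h2.symm
    · have a1 := hinj2 (i + 1) (by omega) 0 (by omega) h2
      have h0 : i = n - 1 := by omega
      subst h0
      exact hw2 h1.symm
  -- the list of all edges : cycle edges in order, then the special chord, then the rest
  obtain ⟨L, hLn, hLm, hlen, hgetc, hget0⟩ :
      ∃ L : List G.edgeSet, L.Nodup ∧ (∀ e : G.edgeSet, e ∈ L) ∧ n < L.length ∧
        (∀ (i : ℕ) (hi : i < n) (hi' : i < L.length), L[i]'hi' = ecyc ⟨i, hi⟩) ∧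
        (∀ (h : n < L.length), L[n]'h = c0) := by
    set rest : Finset G.edgeSet := Finset.univ \ insert c0 (Finset.image ecyc Finset.univ)
      with hrest
    refine ⟨List.map ecyc (List.finRange n) ++ c0 :: rest.toList, ?_, ?_, ?_, ?_, ?_⟩
    · rw [List.nodup_append]
      refine ⟨(List.nodup_finRange n).map hecyc_inj, ?_, ?_⟩
      · rw [List.nodup_cons]
        constructor
        · intro hc
          have h := Finset.mem_toList.mp hc
          rw [hrest, Finset.mem_sdiff] at h
          exact h.2 (Finset.mem_insert_self _ _)
        · exact rest.nodup_toList
      · intro x hx y hx2 hxy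
        obtain ⟨i, -, rfl⟩ := List.mem_map.mp hx
        subst hxy
        rcases List.mem_cons.mp hx2 with h | h
        · exact hc0 i h
        · have h2 := Finset.mem_toList.mp h
          rw [hrest, Finset.mem_sdiff] at h2
          exact h2.2 (Finset.mem_insert_of_mem
            (Finset.mem_image_of_mem ecyc (Finset.mem_univ i)))
    · intro e
      rw [List.mem_append]
      by_cases h : e ∈ insert c0 (Finset.image ecyc Finset.univ)
      · rcases Finset.mem_insert.mp h with rfl | h
        · exact Or.inr List.mem_cons_self
        · obtain ⟨i, -, rfl⟩ := Finset.mem_image.mp h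
          exact Or.inl (List.mem_map.mpr ⟨i, List.mem_finRange i, rfl⟩)
      · exact Or.inr (List.mem_cons_of_mem _
          (Finset.mem_toList.mpr (Finset.mem_sdiff.mpr ⟨Finset.mem_univ _, h⟩)))
    · simp only [List.length_append, List.length_map, List.length_finRange, List.length_cons]
      omega
    · intro i hi hi'
      have hml : i < (List.map ecyc (List.finRange n)).length := by simpa using hi
      rw [List.getElem_append_left hml, List.getElem_map, List.getElem_finRange]
      rfl
    · intro h
      have hml : (List.map ecyc (List.finRange n)).length ≤ n := by simp
      rw [List.getElem_append_right hml]
      simp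
  set eqv : Fin L.length ≃ G.edgeSet := List.Nodup.getEquivOfForallMemList L hLn hLm
    with heqv
  have happly : ∀ (i : ℕ) (hi : i < L.length), eqv ⟨i, hi⟩ = L[i]'hi := by
    intro i hi
    rw [heqv]
    simp [List.Nodup.getEquivOfForallMemList]
  have hcardm : L.length = G.edgeFinset.card := by
    calc L.length = Fintype.card (Fin L.length) := (Fintype.card_fin _).symm
      _ = Fintype.card G.edgeSet := Fintype.card_congr eqv
      _ = G.edgeFinset.card := SimpleGraph.edgeFinset_card.symm
  set label : G.edgeSet ≃ Fin G.edgeFinset.card := eqv.symm.trans (finCongr hcardm)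
    with hlabeldef
  have hval : ∀ e : G.edgeSet, (label e : ℕ) = (eqv.symm e : ℕ) := by
    intro e
    rw [hlabeldef]
    rfl
  have hlabel : ∀ (i : ℕ) (hi : i < L.length), ((label (L[i]'hi)) : ℕ) = i := by
    intro i hi
    rw [hval, ← happly i hi, Equiv.symm_apply_apply]
  have heLi : ∀ (e : G.edgeSet) (i : ℕ) (hi : i < L.length),
      (label e : ℕ) = i → e = L[i]'hi := by
    intro e i hi hlab
    have h1 : eqv.symm e = ⟨i, hi⟩ := Fin.ext (by rw [← hval e, hlab])
    conv_lhs => rw [← eqv.apply_symm_apply e, h1]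
    exact happly i hi
  refine ⟨fun e => stmt4OrientFun f w n (label e) e, label, ?_, ?_⟩
  · intro e
    show (e : Sym2 V) = s((stmt4OrientFun f w n (label e) e).1,
      (stmt4OrientFun f w n (label e) e).2)
    have hkL : (label e : ℕ) < L.length := by
      rw [hval]
      exact (eqv.symm e).2
    rcases Nat.lt_trichotomy (label e : ℕ) n with hlt | heq | hgt
    · have he : e = ecyc ⟨(label e : ℕ), hlt⟩ :=
        (heLi e _ hkL rfl).trans (hgetc _ hlt hkL)
      by_cases hpar : (label e : ℕ) % 2 = 0
      · rw [stmt4OrientFun_lt hlt hpar]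
        conv_lhs => rw [he]
        exact hecyc _ hlt
      · rw [stmt4OrientFun_lt' hlt hpar]
        conv_lhs => rw [he, hecyc _ hlt]
        exact Sym2.eq_swap
    · have he : e = c0 := (heLi e n hlen heq).trans (hget0 hlen)
      rw [heq, stmt4OrientFun_eq, he, hc0v]
    · rw [stmt4OrientFun_gt hgt]
      exact stmt4_sym2_out _
  · intro v
    obtain ⟨i, hi, rfl⟩ := hsurj v
    rcases Nat.eq_zero_or_pos i with rfl | hip
    · -- vertex f 0 : use cycle edge n-1 and the chord c0
      have h1 : n - 1 < L.length := by omega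
      have ll1 : ((label (L[n-1]'h1)) : ℕ) = n - 1 := hlabel (n-1) h1
      have ll2 : ((label (L[n]'hlen)) : ℕ) = n := hlabel n hlen
      have hsub : n - 1 + 1 = n := by omega
      have hv1 : ((L[n-1]'h1) : Sym2 V) = s(f (n-1), f n) := by
        rw [hgetc (n-1) (by omega) h1, hecyc (n-1) (by omega), hsub]
      have hv2 : ((L[n]'hlen) : Sym2 V) = s(f 0, w) := by
        rw [hget0, hc0v]
      refine ⟨L[n-1]'h1, L[n]'hlen, ?_, ?_, ?_, ?_, ?_⟩
      · intro hcon
        have : ((label (L[n-1]'h1)) : ℕ) = ((label (L[n]'hlen)) : ℕ) := by rw [hcon]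
        omega
      · rw [hv1, Sym2.mem_iff]
        right
        exact hf0.symm
      · rw [hv2, Sym2.mem_iff]
        left
        rfl
      · left
        constructor
        · show (stmt4OrientFun f w n (label (L[n-1]'h1) : ℕ) ((L[n-1]'h1) : Sym2 V)).1 = f 0
          rw [ll1, stmt4OrientFun_lt' (by omega) (by omega)]
          show f (n - 1 + 1) = f 0
          rw [hsub, hf0]
        · show (stmt4OrientFun f w n (label (L[n]'hlen) : ℕ) ((L[n]'hlen) : Sym2 V)).1 = f 0
          rw [ll2, stmt4OrientFun_eq]
      · left
        rw [ll1, ll2]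
        omega
    · -- vertex f i, i ≥ 1 : use cycle edges i-1, i
      have h1 : i - 1 < L.length := by omega
      have h2 : i < L.length := by omega
      have ll1 : ((label (L[i-1]'h1)) : ℕ) = i - 1 := hlabel (i-1) h1
      have ll2 : ((label (L[i]'h2)) : ℕ) = i := hlabel i h2
      have hsub : i - 1 + 1 = i := by omega
      have hv1 : ((L[i-1]'h1) : Sym2 V) = s(f (i-1), f i) := by
        rw [hgetc (i-1) (by omega) h1, hecyc (i-1) (by omega), hsub]
      have hv2 : ((L[i]'h2) : Sym2 V) = s(f i, f (i + 1)) := by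
        rw [hgetc i hi h2, hecyc i hi]
      refine ⟨L[i-1]'h1, L[i]'h2, ?_, ?_, ?_, ?_, ?_⟩
      · intro hcon
        have : ((label (L[i-1]'h1)) : ℕ) = ((label (L[i]'h2)) : ℕ) := by rw [hcon]
        omega
      · rw [hv1, Sym2.mem_iff]
        right
        rfl
      · rw [hv2, Sym2.mem_iff]
        left
        rfl
      · by_cases hpar : i % 2 = 0
        · left
          constructor
          · show (stmt4OrientFun f w n (label (L[i-1]'h1) : ℕ) ((L[i-1]'h1) : Sym2 V)).1 = f i
            rw [ll1, stmt4OrientFun_lt' (by omega) (by omega)]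
            show f (i - 1 + 1) = f i
            rw [hsub]
          · show (stmt4OrientFun f w n (label (L[i]'h2) : ℕ) ((L[i]'h2) : Sym2 V)).1 = f i
            rw [ll2, stmt4OrientFun_lt hi hpar]
        · right
          constructor
          · show (stmt4OrientFun f w n (label (L[i-1]'h1) : ℕ) ((L[i-1]'h1) : Sym2 V)).2 = f i
            rw [ll1, stmt4OrientFun_lt (by omega) (by omega)]
            show f (i - 1 + 1) = f i
            rw [hsub]
          · show (stmt4OrientFun f w n (label (L[i]'h2) : ℕ) ((L[i]'h2) : Sym2 V)).2 = f i
            rw [ll2, stmt4OrientFun_lt' hi hpar]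
      · left
        rw [ll1, ll2]
        omega

end Stmt4Aux

/-- Every Hamiltonian cubic graph admits a pair-oriented labeling: there are an
orientation of the edges and a bijective labeling of the edges by `1, …, m` (here modeled by
an equivalence with `Fin m`) such that every vertex has two incident edges that are both
oriented out of it or both into it and whose labels are consecutive. -/
theorem stmt_4 {V : Type*} [Fintype V] [DecidableEq V] (G : SimpleGraph V)
    [DecidableRel G.Adj]
    (hcubic : ∀ v : V, G.degree v = 3)
    (hham : G.IsHamiltonian) :
    ∃ (orient : G.edgeSet → V × V) (label : G.edgeSet ≃ Fin G.edgeFinset.card),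
      (∀ e : G.edgeSet, (e : Sym2 V) = s((orient e).1, (orient e).2)) ∧
      (∀ v : V, ∃ e₁ e₂ : G.edgeSet, e₁ ≠ e₂ ∧
        v ∈ (e₁ : Sym2 V) ∧ v ∈ (e₂ : Sym2 V) ∧
        (((orient e₁).1 = v ∧ (orient e₂).1 = v) ∨
          ((orient e₁).2 = v ∧ (orient e₂).2 = v)) ∧
        ((label e₁ : ℕ) + 1 = (label e₂ : ℕ) ∨ (label e₂ : ℕ) + 1 = (label e₁ : ℕ))) := by
  classical
  have hcard1 : Fintype.card V ≠ 1 := by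
    intro h
    have hpos : 0 < Fintype.card V := by omega
    obtain ⟨v⟩ := Fintype.card_pos_iff.mp hpos
    have h3 := hcubic v
    have h4 := G.degree_lt_card_verts v
    omega
  obtain ⟨a, p, hp⟩ := hham hcard1
  set n : ℕ := p.length with hn
  have hncard : n = Fintype.card V := hp.length_eq
  have hn3 : 3 ≤ n := hp.isCycle.three_le_length
  have hadj : ∀ i, i < n → G.Adj (p.getVert i) (p.getVert (i + 1)) :=
    fun i hi => p.adj_getVert_succ hi
  have hf0 : p.getVert n = p.getVert 0 := by
    rw [p.getVert_length, p.getVert_zero]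
  -- parity
  have hsum := G.sum_degrees_eq_twice_card_edges
  have hsum3 : ∑ v : V, G.degree v = 3 * Fintype.card V := by
    rw [Finset.sum_congr rfl (fun v _ => hcubic v)]
    simp [Finset.card_univ, mul_comm]
  have hnev : n % 2 = 0 := by omega
  -- injectivity
  have hsup : ∀ (k : ℕ) (hk : k < p.support.length), p.support[k] = p.getVert k :=
    stmt4_support_getElem p
  have htl : p.support.tail.Nodup := hp.isCycle.support_nodup
  have hlent : p.support.tail.length = n := by
    rw [List.length_tail, SimpleGraph.Walk.length_support]
    omega
  have htlk : ∀ (k : ℕ) (hk : k < p.support.tail.length),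
      p.support.tail[k]'hk = p.getVert (k + 1) := by
    intro k hk
    rw [List.getElem_tail]
    exact hsup (k + 1) (by rw [SimpleGraph.Walk.length_support]; omega)
  have hinj : ∀ i, i < n → ∀ j, j < n → p.getVert i = p.getVert j → i = j := by
    have key : ∀ i, 1 ≤ i → i < n → ∀ j, 1 ≤ j → j < n →
        p.getVert i = p.getVert j → i = j := by
      intro i hi1 hi j hj1 hj hij
      have e1 : p.support.tail[i-1]'(by omega) = p.getVert i := by
        rw [htlk (i-1) (by omega)]
        congr 1
        omega
      have e2 : p.support.tail[j-1]'(by omega) = p.getVert j := by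
        rw [htlk (j-1) (by omega)]
        congr 1
        omega
      have e3 : p.support.tail[i-1]'(by omega) = p.support.tail[j-1]'(by omega) := by
        rw [e1, e2, hij]
      have := (htl.getElem_inj_iff).mp e3
      omega
    have key0 : ∀ j, 1 ≤ j → j < n → p.getVert j ≠ p.getVert 0 := by
      intro j hj1 hj hcon
      have e1 : p.support.tail[j-1]'(by omega) = p.getVert j := by
        rw [htlk (j-1) (by omega)]
        congr 1
        omega
      have e2 : p.support.tail[n-1]'(by omega) = p.getVert n := by
        rw [htlk (n-1) (by omega)]
        congr 1
        omega
      have e3 : p.support.tail[j-1]'(by omega) = p.support.tail[n-1]'(by omega) := by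
        rw [e1, e2, hf0, hcon]
      have := (htl.getElem_inj_iff).mp e3
      omega
    intro i hi j hj hij
    rcases Nat.eq_zero_or_pos i with rfl | hip
    · rcases Nat.eq_zero_or_pos j with rfl | hjp
      · rfl
      · exact absurd hij.symm (key0 j hjp hj)
    · rcases Nat.eq_zero_or_pos j with rfl | hjp
      · exact absurd hij (key0 i hip hi)
      · exact key i hip hi j hjp hj hij
  -- surjectivity
  have hsurj : ∀ v : V, ∃ i, i < n ∧ p.getVert i = v := by
    intro v
    obtain ⟨k, hk1, hk2⟩ :=
      (SimpleGraph.Walk.mem_support_iff_exists_getVert).mp (hp.mem_support v)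
    rcases Nat.lt_or_ge k n with h | h
    · exact ⟨k, h, hk1⟩
    · have hkn : k = n := by omega
      exact ⟨0, by omega, by rw [← hf0, ← hkn, hk1]⟩
  -- a chord at the base vertex
  have hcard3 : (G.neighborFinset (p.getVert 0)).card = 3 := by
    rw [G.card_neighborFinset_eq_degree]
    exact hcubic _
  obtain ⟨w, hwmem, hwne1, hwne2⟩ : ∃ w ∈ G.neighborFinset (p.getVert 0),
      w ≠ p.getVert 1 ∧ w ≠ p.getVert (n - 1) := by
    by_contra hcon
    push_neg at hcon
    have hsub : G.neighborFinset (p.getVert 0) ⊆ {p.getVert 1, p.getVert (n-1)} := by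
      intro x hx
      by_cases hx1 : x = p.getVert 1
      · simp [hx1]
      · simp [hcon x hx hx1]
    have hle := Finset.card_le_card hsub
    have h2 : ({p.getVert 1, p.getVert (n-1)} : Finset V).card ≤ 2 :=
      (Finset.card_insert_le _ _).trans (by simp)
    omega
  have hw : G.Adj (p.getVert 0) w := by rwa [SimpleGraph.mem_neighborFinset] at hwmem
  exact stmt4_aux G n p.getVert hn3 hnev hadj hf0 hinj hsurj w hw hwne1 hwne2
end

section
/- Under the non-Helly triple setup (radii r_a, r_b, r_c ∈ [1, 1+ε] with 0 ≤ ε ≤ 0.0001, pairwise lens widths at least 0.265, and no common point), each of the three lens widths is less than 0.275: r_a + r_b − dist(a, b) < 0.275, r_b + r_c − dist(b, c) < 0.275, and r_c + r_a − dist(c, a) < 0.275. -/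
private lemma nh_key (A B D : ℝ) (hA0 : 0 ≤ A) (hB0 : 0 ≤ B) (hD0 : 0 ≤ D)
    (hA : A ≤ 1.7252^2) (hB : B ≤ 1.7352^2) (hD : D ≤ 1.7352^2)
    (h1 : D ≤ A + B) (h2 : A ≤ B + D) (h3 : B ≤ A + D) :
    A*B*D + (A+B-D)^2 ≤ 4*A*B := by
  nlinarith [mul_nonneg hA0 hB0, mul_nonneg hB0 hD0, mul_nonneg hA0 hD0,
    sq_nonneg (A+B-D), sq_nonneg (A-B), sq_nonneg (A-D), sq_nonneg (B-D),
    mul_nonneg (mul_nonneg hA0 hB0) hD0,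
    mul_nonneg (sub_nonneg.2 h1) (sub_nonneg.2 h2),
    mul_nonneg (sub_nonneg.2 h1) (sub_nonneg.2 h3),
    mul_nonneg (sub_nonneg.2 h2) (sub_nonneg.2 h3),
    mul_nonneg (mul_nonneg (sub_nonneg.2 h1) (sub_nonneg.2 h2)) (sub_nonneg.2 h3)]

private lemma nh_norm_comb {F : Type*} [NormedAddCommGroup F] [InnerProductSpace ℝ F]
    (u w : F) (p q : ℝ) :
    ‖p•u + q•w‖^2 = p^2*‖u‖^2 + 2*(p*q)*(inner ℝ u w : ℝ) + q^2*‖w‖^2 := by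
  rw [norm_add_sq_real, real_inner_smul_left, real_inner_smul_right,
    norm_smul, norm_smul]
  simp only [mul_pow, Real.norm_eq_abs, sq_abs]
  ring

set_option maxHeartbeats 1000000 in
private lemma nh_core (a b c : EuclideanSpace ℝ (Fin 2))
    (h1 : dist a b ≤ 1.7252) (h2 : dist b c ≤ 1.7352) (h3 : dist c a ≤ 1.7352) :
    ∃ x : EuclideanSpace ℝ (Fin 2), dist x a ≤ 1 ∧ dist x b ≤ 1 ∧ dist x c ≤ 1 := by
  set u : EuclideanSpace ℝ (Fin 2) := b - a with hu
  set w : EuclideanSpace ℝ (Fin 2) := c - a with hw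
  set A : ℝ := ‖u‖^2 with hAdef
  set B : ℝ := ‖w‖^2 with hBdef
  set C : ℝ := (inner ℝ u w : ℝ) with hCdef
  set D : ℝ := ‖u - w‖^2 with hDdef
  have hA0 : 0 ≤ A := sq_nonneg _
  have hB0 : 0 ≤ B := sq_nonneg _
  have hD0 : 0 ≤ D := sq_nonneg _
  have hun : ‖u‖ = dist a b := by rw [dist_eq_norm, hu, norm_sub_rev]
  have hwn : ‖w‖ = dist c a := by rw [dist_eq_norm, hw]
  have huwn : ‖u - w‖ = dist b c := by
    rw [dist_eq_norm, hu, hw]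
    congr 1
    abel
  have hA : A ≤ 1.7252^2 := by
    rw [hAdef, hun]; exact pow_le_pow_left₀ dist_nonneg h1 2
  have hB : B ≤ 1.7352^2 := by
    rw [hBdef, hwn]; exact pow_le_pow_left₀ dist_nonneg h3 2
  have hD : D ≤ 1.7352^2 := by
    rw [hDdef, huwn]; exact pow_le_pow_left₀ dist_nonneg h2 2
  have hDC : D = A + B - 2*C := by
    rw [hDdef, hAdef, hBdef, hCdef, norm_sub_sq_real]; ring
  have key : ∀ p q : ℝ,
      p^2*A + 2*(p*q)*C + q^2*B ≤ 1 →
      (p-1)^2*A + 2*((p-1)*q)*C + q^2*B ≤ 1 →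
      p^2*A + 2*(p*(q-1))*C + (q-1)^2*B ≤ 1 →
      ∃ x : EuclideanSpace ℝ (Fin 2), dist x a ≤ 1 ∧ dist x b ≤ 1 ∧ dist x c ≤ 1 := by
    intro p q hx hy hz
    refine ⟨a + (p•u + q•w), ?_, ?_, ?_⟩
    · have e : a + (p•u + q•w) - a = p•u + q•w := by abel
      rw [dist_eq_norm, e]
      nlinarith [norm_nonneg (p•u + q•w), nh_norm_comb u w p q]
    · have e : a + (p•u + q•w) - b = (p-1)•u + q•w := by
        rw [hu, hw]; module
      rw [dist_eq_norm, e]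
      nlinarith [norm_nonneg ((p-1)•u + q•w), nh_norm_comb u w (p-1) q]
    · have e : a + (p•u + q•w) - c = p•u + (q-1)•w := by
        rw [hu, hw]; module
      rw [dist_eq_norm, e]
      nlinarith [norm_nonneg (p•u + (q-1)•w), nh_norm_comb u w p (q-1)]
  rcases le_or_gt (B + D) A with hc1 | hc1
  · exact key (1/2) 0 (by nlinarith) (by nlinarith) (by nlinarith)
  rcases le_or_gt (A + D) B with hc2 | hc2
  · exact key 0 (1/2) (by nlinarith) (by nlinarith) (by nlinarith)
  rcases le_or_gt (A + B) D with hc3 | hc3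
  · exact key (1/2) (1/2) (by nlinarith) (by nlinarith) (by nlinarith)
  -- acute case: circumcenter
  have hCpos : 0 < C := by linarith [hDC]
  have hAC : C < A := by linarith [hDC]
  have hBC : C < B := by linarith [hDC]
  have hG : 0 < A*B - C^2 := by
    have t1 := mul_pos (sub_pos.2 hAC) (sub_pos.2 hBC)
    have t2 := mul_pos hCpos (sub_pos.2 hAC)
    have t3 := mul_pos hCpos (sub_pos.2 hBC)
    nlinarith [t1, t2, t3]
  have hineq : A*B*D + (A+B-D)^2 ≤ 4*A*B :=
    nh_key A B D hA0 hB0 hD0 hA hB hD (le_of_lt hc3) (by linarith) (by linarith)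
  have hABD : A*B*D ≤ 4*(A*B - C^2) := by
    have : (A+B-D)^2 = 4*C^2 := by rw [hDC]; ring
    linarith
  set G : ℝ := A*B - C^2 with hGdef
  set p : ℝ := B*(A-C)/(2*G) with hp
  set q : ℝ := A*(B-C)/(2*G) with hq
  have hGne : (2*G) ≠ 0 := by positivity
  have hval1 : p^2*A + 2*(p*q)*C + q^2*B = A*B*D/(4*G) := by
    rw [hp, hq, hDC, hGdef]
    field_simp [show B*A - C^2 ≠ 0 by linarith]
    ring
  have hval2 : (p-1)^2*A + 2*((p-1)*q)*C + q^2*B = A*B*D/(4*G) := by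
    rw [hp, hq, hDC, hGdef]
    field_simp [show B*A - C^2 ≠ 0 by linarith]
    ring
  have hval3 : p^2*A + 2*(p*(q-1))*C + (q-1)^2*B = A*B*D/(4*G) := by
    rw [hp, hq, hDC, hGdef]
    field_simp [show B*A - C^2 ≠ 0 by linarith]
    ring
  have hle : A*B*D/(4*G) ≤ 1 := by
    rw [div_le_one (by positivity)]
    linarith
  exact key p q (by rw [hval1]; exact hle) (by rw [hval2]; exact hle)
    (by rw [hval3]; exact hle)

/-- Under the non-Helly triple setup, each of the three lens widths is
less than 0.275. -/
theorem stmt_5 (ε : ℝ) (hε0 : 0 ≤ ε) (hε1 : ε ≤ 0.0001)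
    (a b c : EuclideanSpace ℝ (Fin 2)) (ra rb rc : ℝ)
    (hra1 : 1 ≤ ra) (hra2 : ra ≤ 1 + ε)
    (hrb1 : 1 ≤ rb) (hrb2 : rb ≤ 1 + ε)
    (hrc1 : 1 ≤ rc) (hrc2 : rc ≤ 1 + ε)
    (hwab : 0.265 ≤ ra + rb - dist a b)
    (hwbc : 0.265 ≤ rb + rc - dist b c)
    (hwca : 0.265 ≤ rc + ra - dist c a)
    (hnonHelly : ¬ ∃ x : EuclideanSpace ℝ (Fin 2),
      dist x a ≤ ra ∧ dist x b ≤ rb ∧ dist x c ≤ rc) :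
    ra + rb - dist a b < 0.275 ∧ rb + rc - dist b c < 0.275 ∧
    rc + ra - dist c a < 0.275 := by
  refine ⟨?_, ?_, ?_⟩
  · by_contra h
    push_neg at h
    obtain ⟨x, hx1, hx2, hx3⟩ := nh_core a b c (by linarith) (by linarith)
      (by linarith)
    exact hnonHelly ⟨x, by linarith, by linarith, by linarith⟩
  · by_contra h
    push_neg at h
    obtain ⟨x, hx1, hx2, hx3⟩ := nh_core b c a (by linarith) (by linarith)
      (by linarith)
    exact hnonHelly ⟨x, by linarith, by linarith, by linarith⟩
  · by_contra h
    push_neg at h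
    obtain ⟨x, hx1, hx2, hx3⟩ := nh_core c a b (by linarith) (by linarith)
      (by linarith)
    exact hnonHelly ⟨x, by linarith, by linarith, by linarith⟩
end

section
/- Under the non-Helly triple setup (radii r_a, r_b, r_c ∈ [1, 1+ε] with 0 ≤ ε ≤ 0.0001, pairwise lens widths at least 0.265, and no common point), every interior angle of the triangle abc lies in the interval [58.024°, 60.988°]: each of the angles ∠bac (at a), ∠abc (at b), and ∠bca (at c) is at least 58.024·π/180 and at most 60.988·π/180 radians. -/
open EuclideanGeometry Real
open scoped RealInnerProductSpace

private lemma inner_pos_aux (a b c : EuclideanSpace ℝ (Fin 2))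
    (hH : ∀ x : EuclideanSpace ℝ (Fin 2), ¬ (dist x a ≤ 1 ∧ dist x b ≤ 1 ∧ dist x c ≤ 1))
    (hab : dist a b ≤ 2) : 0 < ⟪a - c, b - c⟫ := by
  by_contra h
  push_neg at h
  set x : EuclideanSpace ℝ (Fin 2) := (2⁻¹ : ℝ) • (a + b) with hx
  have hxa : x - a = (2⁻¹ : ℝ) • (b - a) := by rw [hx]; module
  have hxb : x - b = (2⁻¹ : ℝ) • (a - b) := by rw [hx]; module
  have hxc : x - c = (2⁻¹ : ℝ) • ((a - c) + (b - c)) := by rw [hx]; module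
  have hd : dist a b = ‖a - b‖ := dist_eq_norm a b
  have hd0 : 0 ≤ ‖a - b‖ := norm_nonneg _
  have h1 : dist x a ≤ 1 := by
    rw [dist_eq_norm, hxa, norm_smul, ← norm_neg (b - a), neg_sub]
    simp only [norm_inv, Real.norm_ofNat]
    linarith [hab, hd]
  have h2 : dist x b ≤ 1 := by
    rw [dist_eq_norm, hxb, norm_smul]
    simp only [norm_inv, Real.norm_ofNat]
    linarith [hab, hd]
  have h3 : dist x c ≤ 1 := by
    rw [dist_eq_norm]
    have hsq : ‖x - c‖ ^ 2 ≤ 1 := by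
      rw [hxc, norm_smul]
      have e1 : ‖(a - c) + (b - c)‖ ^ 2
          = ‖a - c‖ ^ 2 + 2 * ⟪a - c, b - c⟫ + ‖b - c‖ ^ 2 := by
        rw [← real_inner_self_eq_norm_sq, real_inner_add_add_self,
          real_inner_self_eq_norm_sq, real_inner_self_eq_norm_sq]
      have e2 : ‖a - b‖ ^ 2 = ‖a - c‖ ^ 2 - 2 * ⟪a - c, b - c⟫ + ‖b - c‖ ^ 2 := by
        have : a - b = (a - c) - (b - c) := by module
        rw [this, norm_sub_sq_real]
      have hab2 : ‖a - b‖ ^ 2 ≤ 4 := by nlinarith [hab, hd]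
      simp only [norm_inv, Real.norm_ofNat]
      nlinarith [e1, e2, hab2, h]
    nlinarith [norm_nonneg (x - c)]
  exact hH x ⟨h1, h2, h3⟩

private lemma circ_eq1 (p q I : ℝ) (hD : p * q - I ^ 2 ≠ 0) :
    (q * (p - I) / (2 * (p * q - I ^ 2))) ^ 2 * p
      + 2 * (q * (p - I) / (2 * (p * q - I ^ 2))) * (p * (q - I) / (2 * (p * q - I ^ 2))) * I
      + (p * (q - I) / (2 * (p * q - I ^ 2))) ^ 2 * q
      = p * q * (p + q - 2 * I) / (4 * (p * q - I ^ 2)) := by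
  obtain ⟨D, hDd⟩ : ∃ D, p * q - I ^ 2 = D := ⟨_, rfl⟩
  rw [hDd] at hD ⊢
  field_simp
  rw [← hDd]
  ring

private lemma circ_eq2 (p q I : ℝ) (hD : p * q - I ^ 2 ≠ 0) :
    (q * (p - I) / (2 * (p * q - I ^ 2)) - 1) ^ 2 * p
      + 2 * (q * (p - I) / (2 * (p * q - I ^ 2)) - 1) * (p * (q - I) / (2 * (p * q - I ^ 2))) * I
      + (p * (q - I) / (2 * (p * q - I ^ 2))) ^ 2 * q
      = p * q * (p + q - 2 * I) / (4 * (p * q - I ^ 2)) := by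
  obtain ⟨D, hDd⟩ : ∃ D, p * q - I ^ 2 = D := ⟨_, rfl⟩
  rw [hDd] at hD ⊢
  field_simp
  rw [← hDd]
  ring

private lemma circ_eq3 (p q I : ℝ) (hD : p * q - I ^ 2 ≠ 0) :
    (q * (p - I) / (2 * (p * q - I ^ 2))) ^ 2 * p
      + 2 * (q * (p - I) / (2 * (p * q - I ^ 2))) * (p * (q - I) / (2 * (p * q - I ^ 2)) - 1) * I
      + (p * (q - I) / (2 * (p * q - I ^ 2)) - 1) ^ 2 * q
      = p * q * (p + q - 2 * I) / (4 * (p * q - I ^ 2)) := by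
  obtain ⟨D, hDd⟩ : ∃ D, p * q - I ^ 2 = D := ⟨_, rfl⟩
  rw [hDd] at hD ⊢
  field_simp
  rw [← hDd]
  ring

private lemma num_helper (p q I N : ℝ) (hIpos : 0 < I) (hD : I ^ 2 < p * q)
    (hR : 4 * (p * q - I ^ 2) < p * q * (p + q - 2 * I))
    (hdub : p + q - 2 * I ≤ 3.01091904)
    (hN0 : 0 ≤ N) (hsq : N ^ 2 = p * q) : 0.497 * N ≤ I := by
  have hpq0 : 0 < p * q := lt_of_le_of_lt (sq_nonneg I) hD
  have h1 : p * q * (p + q - 2 * I) ≤ p * q * 3.01091904 :=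
    mul_le_mul_of_nonneg_left hdub (le_of_lt hpq0)
  have hI2 : (0.497 : ℝ) ^ 2 * (p * q) ≤ I ^ 2 := by nlinarith
  nlinarith [sq_nonneg (I - 0.497 * N), sq_nonneg (I + 0.497 * N)]

private lemma sq_le_one_imp (r : ℝ) (h0 : 0 ≤ r) (h : r ^ 2 ≤ 1) : r ≤ 1 := by nlinarith

private lemma key_cos (a b c : EuclideanSpace ℝ (Fin 2))
    (hH : ∀ x : EuclideanSpace ℝ (Fin 2), ¬ (dist x a ≤ 1 ∧ dist x b ≤ 1 ∧ dist x c ≤ 1))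
    (hab : dist a b ≤ 1.7352) (hbc : dist b c ≤ 1.7352) (hca : dist c a ≤ 1.7352) :
    (0.497 : ℝ) ≤ Real.cos (EuclideanGeometry.angle b c a) := by
  set u : EuclideanSpace ℝ (Fin 2) := a - c with hu
  set v : EuclideanSpace ℝ (Fin 2) := b - c with hv
  set p : ℝ := ‖u‖ ^ 2 with hp
  set q : ℝ := ‖v‖ ^ 2 with hq
  set I : ℝ := ⟪u, v⟫ with hI
  have hIpos : 0 < I := inner_pos_aux a b c hH (by linarith)
  have hIa0 : 0 < ⟪b - a, c - a⟫ :=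
    inner_pos_aux b c a (fun x hx => hH x ⟨hx.2.2, hx.1, hx.2.1⟩) (by linarith)
  have hIb0 : 0 < ⟪a - b, c - b⟫ :=
    inner_pos_aux a c b (fun x hx => hH x ⟨hx.1, hx.2.2, hx.2.1⟩)
      (by rw [dist_comm]; linarith)
  have hba : b - a = v - u := by rw [hu, hv]; module
  have hca' : c - a = -u := by rw [hu]; module
  have hab' : a - b = u - v := by rw [hu, hv]; module
  have hcb : c - b = -v := by rw [hv]; module
  have hIa : 0 < p - I := by
    have h1 : ⟪b - a, c - a⟫ = p - I := by
      rw [hba, hca', hp, hI, ← real_inner_self_eq_norm_sq]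
      simp [inner_sub_left, inner_neg_right, real_inner_comm u v]
    linarith [h1 ▸ hIa0]
  have hIb : 0 < q - I := by
    have h1 : ⟪a - b, c - b⟫ = q - I := by
      rw [hab', hcb, hq, hI, ← real_inner_self_eq_norm_sq]
      simp [inner_sub_left, inner_neg_right, real_inner_comm u v]
    linarith [h1 ▸ hIb0]
  have hD : I ^ 2 < p * q := by nlinarith
  have hd2 : (dist a b) ^ 2 = p + q - 2 * I := by
    rw [dist_eq_norm, hab', norm_sub_sq_real, hp, hq, hI]
    ring
  have expand : ∀ s t : ℝ, ‖s • u + t • v‖ ^ 2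
      = s ^ 2 * p + 2 * s * t * I + t ^ 2 * q := by
    intro s t
    rw [← real_inner_self_eq_norm_sq, real_inner_add_add_self, real_inner_smul_left,
      real_inner_smul_right, real_inner_smul_left, real_inner_smul_right,
      real_inner_smul_left, real_inner_smul_right,
      real_inner_self_eq_norm_sq, real_inner_self_eq_norm_sq, ← hp, ← hq, ← hI]
    ring
  -- circumradius inequality from non-Helly
  have hR : 4 * (p * q - I ^ 2) < p * q * (p + q - 2 * I) := by
    by_contra hcon
    push_neg at hcon
    have hD0 : (0:ℝ) < p * q - I ^ 2 := by linarith
    have hDne : p * q - I ^ 2 ≠ 0 := ne_of_gt hD0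
    set A : ℝ := q * (p - I) / (2 * (p * q - I ^ 2)) with hA
    set B : ℝ := p * (q - I) / (2 * (p * q - I ^ 2)) with hB
    set x : EuclideanSpace ℝ (Fin 2) := c + (A • u + B • v) with hx
    have hdivle : p * q * (p + q - 2 * I) / (4 * (p * q - I ^ 2)) ≤ 1 := by
      rw [div_le_one (by linarith)]
      linarith
    have hxc : x - c = A • u + B • v := by rw [hx]; module
    have hxa : x - a = (A - 1) • u + B • v := by rw [hx, hu]; module
    have hxb : x - b = A • u + (B - 1) • v := by rw [hx, hv]; module
    have h3 : dist x c ≤ 1 := by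
      have e : ‖x - c‖ ^ 2 ≤ 1 := by
        rw [hxc, expand, hA, hB, circ_eq1 p q I hDne]
        exact hdivle
      rw [dist_eq_norm]
      exact sq_le_one_imp _ (norm_nonneg _) e
    have h1 : dist x a ≤ 1 := by
      have e : ‖x - a‖ ^ 2 ≤ 1 := by
        rw [hxa, expand, hA, hB, circ_eq2 p q I hDne]
        exact hdivle
      rw [dist_eq_norm]
      exact sq_le_one_imp _ (norm_nonneg _) e
    have h2 : dist x b ≤ 1 := by
      have e : ‖x - b‖ ^ 2 ≤ 1 := by
        rw [hxb, expand, hA, hB, circ_eq3 p q I hDne]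
        exact hdivle
      rw [dist_eq_norm]
      exact sq_le_one_imp _ (norm_nonneg _) e
    exact hH x ⟨h1, h2, h3⟩
  -- numeric consequences
  have hdub : p + q - 2 * I ≤ 3.01091904 := by
    nlinarith [hd2, dist_nonneg (x := a) (y := b), hab]
  have hIge : 0.497 * (‖u‖ * ‖v‖) ≤ I :=
    num_helper p q I (‖u‖ * ‖v‖) hIpos hD hR hdub
      (mul_nonneg (norm_nonneg u) (norm_nonneg v)) (by rw [hp, hq]; ring)
  have hnuv : 0 < ‖u‖ * ‖v‖ := by
    have h1 := real_inner_le_norm u v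
    rw [← hI] at h1
    linarith
  have hangle : EuclideanGeometry.angle b c a = InnerProductGeometry.angle v u := by
    rw [EuclideanGeometry.angle, hv, hu]
    norm_num [vsub_eq_sub]
  rw [hangle, InnerProductGeometry.cos_angle]
  have hnvu : 0 < ‖v‖ * ‖u‖ := by rw [mul_comm]; exact hnuv
  rw [le_div_iff₀ hnvu]
  have hcomm : ‖v‖ * ‖u‖ = ‖u‖ * ‖v‖ := mul_comm _ _
  have hvu : ⟪v, u⟫ = I := by rw [hI]; exact real_inner_comm u v
  rw [hvu]
  linarith

private lemma angle_le_of_cos (θ : ℝ) (h0 : 0 ≤ θ) (hpi : θ ≤ Real.pi)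
    (hc : (0.497 : ℝ) ≤ Real.cos θ) : θ ≤ 60.988 * Real.pi / 180 := by
  have hπ4 : (3.1415 : ℝ) < Real.pi := Real.pi_gt_d4
  have hπ4' : Real.pi < 3.1416 := Real.pi_lt_d4
  set t : ℝ := 60.988 * Real.pi / 180 with ht
  have ht0 : 0 ≤ t := by rw [ht]; positivity
  have htpi : t ≤ Real.pi := by rw [ht]; nlinarith
  have hct : Real.cos t ≤ 0.497 := by
    have hte : t = Real.pi / 3 + 0.988 * Real.pi / 180 := by rw [ht]; ring
    set d : ℝ := 0.988 * Real.pi / 180 with hd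
    have hd0 : 0 < d := by rw [hd]; nlinarith
    have hd1 : d ≤ 1 := by rw [hd]; nlinarith
    have hdlb : 0.0172 ≤ Real.sin d := by
      have h1 := Real.sin_gt_sub_cube hd0
      have h2 : 0.01724 ≤ d := by rw [hd]; nlinarith
      have h3 : d ≤ 0.01725 := by rw [hd]; nlinarith
      have hsq2 : d ^ 2 ≤ 0.0003 := by nlinarith
      have h4 : d ^ 3 ≤ 0.0003 * d := by nlinarith
      linarith
    have hs3 : (1.7 : ℝ) ≤ Real.sqrt 3 := by
      nlinarith [Real.sq_sqrt (by norm_num : (0:ℝ) ≤ 3), Real.sqrt_nonneg 3]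
    have hcd : Real.cos d ≤ 1 := Real.cos_le_one d
    rw [hte, Real.cos_add, Real.cos_pi_div_three, Real.sin_pi_div_three]
    nlinarith [mul_le_mul hs3 hdlb (by norm_num) (Real.sqrt_nonneg 3)]
  by_contra hcon
  push_neg at hcon
  have := Real.strictAntiOn_cos ⟨ht0, htpi⟩ ⟨h0, hpi⟩ hcon
  linarith


/-- Under the non-Helly triple setup, every interior angle of the triangle
`abc` lies in the interval [58.024°, 60.988°]. -/
theorem stmt_6 (ε : ℝ) (hε0 : 0 ≤ ε) (hε1 : ε ≤ 0.0001)
    (a b c : EuclideanSpace ℝ (Fin 2)) (ra rb rc : ℝ)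
    (hra1 : 1 ≤ ra) (hra2 : ra ≤ 1 + ε)
    (hrb1 : 1 ≤ rb) (hrb2 : rb ≤ 1 + ε)
    (hrc1 : 1 ≤ rc) (hrc2 : rc ≤ 1 + ε)
    (hwab : 0.265 ≤ ra + rb - dist a b)
    (hwbc : 0.265 ≤ rb + rc - dist b c)
    (hwca : 0.265 ≤ rc + ra - dist c a)
    (hnonHelly : ¬ ∃ x : EuclideanSpace ℝ (Fin 2),
      dist x a ≤ ra ∧ dist x b ≤ rb ∧ dist x c ≤ rc) :
    (58.024 * Real.pi / 180 ≤ EuclideanGeometry.angle b a c ∧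
      EuclideanGeometry.angle b a c ≤ 60.988 * Real.pi / 180) ∧
    (58.024 * Real.pi / 180 ≤ EuclideanGeometry.angle a b c ∧
      EuclideanGeometry.angle a b c ≤ 60.988 * Real.pi / 180) ∧
    (58.024 * Real.pi / 180 ≤ EuclideanGeometry.angle b c a ∧
      EuclideanGeometry.angle b c a ≤ 60.988 * Real.pi / 180) := by
  have hH : ∀ x : EuclideanSpace ℝ (Fin 2),
      ¬ (dist x a ≤ 1 ∧ dist x b ≤ 1 ∧ dist x c ≤ 1) := by
    intro x hx
    exact hnonHelly ⟨x, hx.1.trans hra1, hx.2.1.trans hrb1, hx.2.2.trans hrc1⟩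
  have hab : dist a b ≤ 1.7352 := by linarith
  have hbc : dist b c ≤ 1.7352 := by linarith
  have hca : dist c a ≤ 1.7352 := by linarith
  have hba : dist b a ≤ 1.7352 := by rw [dist_comm]; linarith
  have hcb : dist c b ≤ 1.7352 := by rw [dist_comm]; linarith
  have hac : dist a c ≤ 1.7352 := by rw [dist_comm]; linarith
  -- cosine lower bounds at each vertex
  have hCc : (0.497 : ℝ) ≤ Real.cos (EuclideanGeometry.angle b c a) :=
    key_cos a b c hH hab hbc hca
  have hCa : (0.497 : ℝ) ≤ Real.cos (EuclideanGeometry.angle b a c) :=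
    key_cos c b a (fun x hx => hH x ⟨hx.2.2, hx.2.1, hx.1⟩) hcb hba hac
  have hCb : (0.497 : ℝ) ≤ Real.cos (EuclideanGeometry.angle a b c) :=
    key_cos c a b (fun x hx => hH x ⟨hx.2.1, hx.2.2, hx.1⟩) hca hab hbc
  -- upper bounds
  have hUa := angle_le_of_cos _ (EuclideanGeometry.angle_nonneg b a c)
    (EuclideanGeometry.angle_le_pi b a c) hCa
  have hUb := angle_le_of_cos _ (EuclideanGeometry.angle_nonneg a b c)
    (EuclideanGeometry.angle_le_pi a b c) hCb
  have hUc := angle_le_of_cos _ (EuclideanGeometry.angle_nonneg b c a)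
    (EuclideanGeometry.angle_le_pi b c a) hCc
  -- distinctness
  have hIa0 : 0 < (inner ℝ (b - a) (c - a) : ℝ) :=
    inner_pos_aux b c a (fun x hx => hH x ⟨hx.2.2, hx.1, hx.2.1⟩) (by linarith)
  have hba' : b ≠ a := by
    intro h
    rw [h, sub_self] at hIa0
    simp at hIa0
  have hca' : c ≠ a := by
    intro h
    rw [h, sub_self] at hIa0
    simp at hIa0
  have hsum := EuclideanGeometry.angle_add_angle_add_angle_eq_pi (p₁ := a) c hba'
  rw [EuclideanGeometry.angle_comm c a b] at hsum
  refine ⟨⟨by linarith, hUa⟩, ⟨by linarith, hUb⟩, ⟨by linarith, hUc⟩⟩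
end

section
/- Let a, b, c be points of the Euclidean plane with dist(a, b) ≤ 1.7252, dist(b, c) ≤ 1.7352, and dist(c, a) ≤ 1.7352. Then there exists a point x with dist(x, a) ≤ 1, dist(x, b) ≤ 1, and dist(x, c) ≤ 1. In particular, any three disks of radius at least 1 centered at a, b, c have a common point, so they do not form a non-Helly triple. -/
open scoped RealInnerProductSpace

set_option maxHeartbeats 1000000

/-- Three points of the plane with pairwise distances at most 1.7252, 1.7352,
1.7352 admit a common point within distance 1 of each of them; in particular any three disks
of radii at least 1 centered at them have a common point. -/
theorem stmt_7 (a b c : EuclideanSpace ℝ (Fin 2))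
    (hab : dist a b ≤ 1.7252) (hbc : dist b c ≤ 1.7352) (hca : dist c a ≤ 1.7352) :
    (∃ x : EuclideanSpace ℝ (Fin 2), dist x a ≤ 1 ∧ dist x b ≤ 1 ∧ dist x c ≤ 1) ∧
    (∀ ra rb rc : ℝ, 1 ≤ ra → 1 ≤ rb → 1 ≤ rc →
      ∃ x : EuclideanSpace ℝ (Fin 2), dist x a ≤ ra ∧ dist x b ≤ rb ∧ dist x c ≤ rc) := by
  have key : ∃ x : EuclideanSpace ℝ (Fin 2), dist x a ≤ 1 ∧ dist x b ≤ 1 ∧ dist x c ≤ 1 := by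
    set m : EuclideanSpace ℝ (Fin 2) := (1/2 : ℝ) • (a + b) with hm
    set u : EuclideanSpace ℝ (Fin 2) := b - a with hu
    set w : EuclideanSpace ℝ (Fin 2) := c - m with hw
    set nu : ℝ := ‖u‖ with hnu
    set dd : ℝ := ‖w‖ with hdd
    set E : ℝ := ⟪u, w⟫ with hE
    have hnorm : ∀ s t : ℝ, ‖s • u + t • w‖ ^ 2 = s^2 * nu^2 + 2*s*t*E + t^2 * dd^2 := by
      intro s t
      have h := norm_add_sq_real (s • u) (t • w)
      rw [real_inner_smul_left, real_inner_smul_right, ← hE] at h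
      rw [h, norm_smul, norm_smul, Real.norm_eq_abs, Real.norm_eq_abs, mul_pow, mul_pow,
        sq_abs, sq_abs, ← hnu, ← hdd]
      ring
    have hnu_le : nu ≤ 1.7252 := by
      have : dist a b = ‖u‖ := by rw [dist_eq_norm, hu, norm_sub_rev]
      rw [hnu, ← this]; exact hab
    have hnu0 : 0 ≤ nu := norm_nonneg _
    have hdd0 : 0 ≤ dd := norm_nonneg _
    -- squared side constraints
    have hca2 : dd^2 + E + nu^2/4 ≤ 3.01091904 := by
      have h1 : c - a = (1/2 : ℝ) • u + (1 : ℝ) • w := by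
        rw [hu, hw, hm]; module
      have h2 : ‖c - a‖ ^ 2 ≤ 1.7352 ^ 2 := by
        have : ‖c - a‖ ≤ 1.7352 := by rw [← dist_eq_norm]; exact hca
        nlinarith [norm_nonneg (c - a)]
      rw [h1, hnorm] at h2
      nlinarith
    have hcb2 : dd^2 - E + nu^2/4 ≤ 3.01091904 := by
      have h1 : c - b = (-(1/2) : ℝ) • u + (1 : ℝ) • w := by
        rw [hu, hw, hm]; module
      have h2 : ‖c - b‖ ^ 2 ≤ 1.7352 ^ 2 := by
        have : ‖c - b‖ ≤ 1.7352 := by rw [← dist_eq_norm, dist_comm]; exact hbc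
        nlinarith [norm_nonneg (c - b)]
      rw [h1, hnorm] at h2
      nlinarith
    by_cases hcase : dd ≤ 1
    · refine ⟨m, ?_, ?_, ?_⟩
      · have h1 : m - a = (1/2 : ℝ) • u + (0 : ℝ) • w := by rw [hu, hm]; module
        have h2 : ‖m - a‖ ^ 2 ≤ 1 := by
          rw [h1, hnorm]; nlinarith
        rw [show dist m a = ‖m - a‖ from dist_eq_norm m a]
        nlinarith [norm_nonneg (m - a)]
      · have h1 : m - b = (-(1/2) : ℝ) • u + (0 : ℝ) • w := by rw [hu, hm]; module
        have h2 : ‖m - b‖ ^ 2 ≤ 1 := by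
          rw [h1, hnorm]; nlinarith
        rw [show dist m b = ‖m - b‖ from dist_eq_norm m b]
        nlinarith [norm_nonneg (m - b)]
      · have h1 : dist m c = dd := by
          rw [dist_eq_norm, hdd, hw, ← norm_neg]; congr 1; module
        rw [h1]; exact hcase
    · push_neg at hcase
      have hddpos : (0:ℝ) < dd := by linarith
      set t : ℝ := 1 - 1/dd with ht
      have ht0 : 0 ≤ t := by
        rw [ht]
        have : 1/dd ≤ 1 := by
          rw [div_le_one hddpos]; linarith
        linarith
      have htdd : t * dd = dd - 1 := by
        rw [ht]; field_simp
      -- key quadratic: discriminant negative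
      have hq : dd^2 - 3.01091904 * dd + 2.26684028 ≥ 0 := by
        nlinarith [sq_nonneg (dd - 1.50545952)]
      have hmain : nu^2/4 ≤ dd^2 - 3.01091904*dd + 3.01091904 := by
        nlinarith [hq, mul_le_mul hnu_le hnu_le hnu0 (by norm_num : (0:ℝ) ≤ 1.7252)]
      refine ⟨m + t • w, ?_, ?_, ?_⟩
      · have h1 : m + t • w - a = (1/2 : ℝ) • u + t • w := by rw [hu, hm]; module
        have h2 : ‖m + t • w - a‖ ^ 2 ≤ 1 := by
          rw [h1, hnorm]
          have htE : t * E ≤ t * (3.01091904 - dd^2 - nu^2/4) := by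
            apply mul_le_mul_of_nonneg_left _ ht0
            linarith
          have hP : nu^2/4 + t*(3.01091904 - dd^2 - nu^2/4) + t^2*dd^2 ≤ 1 := by
            rw [← mul_le_mul_iff_right₀ hddpos]
            have expand : dd * (nu^2/4 + t*(3.01091904 - dd^2 - nu^2/4) + t^2*dd^2)
                = dd*nu^2/4 + (t*dd)*(3.01091904 - dd^2 - nu^2/4) + dd*(t*dd)^2 := by ring
            rw [expand, htdd]
            nlinarith [hmain]
          nlinarith [htE, hP]
        rw [show dist (m + t • w) a = ‖m + t • w - a‖ from dist_eq_norm _ _]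
        nlinarith [norm_nonneg (m + t • w - a)]
      · have h1 : m + t • w - b = (-(1/2) : ℝ) • u + t • w := by rw [hu, hm]; module
        have h2 : ‖m + t • w - b‖ ^ 2 ≤ 1 := by
          rw [h1, hnorm]
          have htE : t * (-E) ≤ t * (3.01091904 - dd^2 - nu^2/4) := by
            apply mul_le_mul_of_nonneg_left _ ht0
            linarith
          have hP : nu^2/4 + t*(3.01091904 - dd^2 - nu^2/4) + t^2*dd^2 ≤ 1 := by
            rw [← mul_le_mul_iff_right₀ hddpos]
            have expand : dd * (nu^2/4 + t*(3.01091904 - dd^2 - nu^2/4) + t^2*dd^2)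
                = dd*nu^2/4 + (t*dd)*(3.01091904 - dd^2 - nu^2/4) + dd*(t*dd)^2 := by ring
            rw [expand, htdd]
            nlinarith [hmain]
          nlinarith [htE, hP]
        rw [show dist (m + t • w) b = ‖m + t • w - b‖ from dist_eq_norm _ _]
        nlinarith [norm_nonneg (m + t • w - b)]
      · have h1 : m + t • w - c = (t - 1) • w := by rw [hw]; module
        have h2 : dist (m + t • w) c = (1 - t) * dd := by
          rw [dist_eq_norm, h1, norm_smul, Real.norm_eq_abs, abs_of_nonpos (by nlinarith), hdd]
          ring
        rw [h2, ht]
        have : (1 - (1 - 1/dd)) * dd = 1 := by field_simp; ring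
        rw [this]
  refine ⟨key, fun ra rb rc hra hrb hrc => ?_⟩
  obtain ⟨x, h1, h2, h3⟩ := key
  exact ⟨x, h1.trans hra, h2.trans hrb, h3.trans hrc⟩
end

section
/- Under the non-Helly triple setup (radii r_a, r_b, r_c ∈ [1, 1+ε] with 0 ≤ ε ≤ 0.0001, pairwise lens widths at least 0.265, and no common point), for each of the three lens midpoints the distances to the centers of its two defining disks lie in the interval [0.8625, 0.8675 + ε]: in particular 0.8625 ≤ dist(a, w_ab) ≤ 0.8675 + ε and 0.8625 ≤ dist(b, w_ab) ≤ 0.8675 + ε, and similarly for w_bc (with centers b, c) and w_ca (with centers c, a). -/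
set_option maxHeartbeats 1000000

lemma hellyCore (p q r : ℝ) (hp : 0 ≤ p) (hq : 0 ≤ q) (hr : 0 ≤ r)
    (h1 : q + r ≤ 5.95194002) (h2 : p + r ≤ 6.02183808) (h3 : p + q ≤ 6.02183808) :
    (p+q)*(q+r)*(r+p) ≤ 8*(p*q+q*r+r*p) := by
  rcases le_total (p+q+r) 8 with hs|hs
  · nlinarith [mul_nonneg (mul_nonneg hp hq) hr, mul_nonneg hp hq, mul_nonneg hq hr, mul_nonneg hp hr, mul_nonneg (sub_nonneg.2 hs) (mul_nonneg hp hq), mul_nonneg (sub_nonneg.2 hs) (mul_nonneg hq hr), mul_nonneg (sub_nonneg.2 hs) (mul_nonneg hp hr)]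
  · have hp2 : 2.04805998 ≤ p := by linarith
    have hq2 : 1.97816192 ≤ q := by linarith
    have hr2 : 1.97816192 ≤ r := by linarith
    nlinarith [mul_nonneg (sub_nonneg.2 hp2) (sub_nonneg.2 hq2), mul_nonneg (sub_nonneg.2 hq2) (sub_nonneg.2 hr2), mul_nonneg (sub_nonneg.2 hp2) (sub_nonneg.2 hr2), mul_nonneg (mul_nonneg (sub_nonneg.2 hp2) (sub_nonneg.2 hq2)) (sub_nonneg.2 hr2), sq_nonneg (p-q), sq_nonneg (q-r), sq_nonneg (p-r)]

lemma norm_combo {F : Type*} [NormedAddCommGroup F] [InnerProductSpace ℝ F] (u v : F) (s t : ℝ) :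
    ‖s•u + t•v‖^2 = s^2*‖u‖^2 + 2*(s*t)*(inner ℝ u v : ℝ) + t^2*‖v‖^2 := by
  rw [norm_add_sq_real, real_inner_smul_left, real_inner_smul_right, norm_smul, norm_smul]
  simp only [Real.norm_eq_abs, mul_pow, sq_abs]
  ring

lemma sq_le_one_aux (d : ℝ) (h0 : 0 ≤ d) (h : d^2 ≤ 1) : d ≤ 1 := by nlinarith

lemma helly_point (a b c : EuclideanSpace ℝ (Fin 2))
    (hA : dist a b ≤ 1.7251) (hB : dist b c ≤ 1.7352) (hC : dist c a ≤ 1.7352) :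
    ∃ x : EuclideanSpace ℝ (Fin 2), dist x a ≤ 1 ∧ dist x b ≤ 1 ∧ dist x c ≤ 1 := by
  set u := b - a with hu'
  set v := c - a with hv'
  have hu : ‖u‖ = dist a b := by rw [hu', dist_comm, dist_eq_norm]
  have hv : ‖v‖ = dist c a := by rw [hv', dist_eq_norm]
  have huv : ‖u - v‖ = dist b c := by rw [hu', hv', dist_eq_norm]; congr 1; abel
  have hg : 2*(inner ℝ u v : ℝ) = dist a b^2 + dist c a^2 - dist b c^2 := by
    have h := norm_sub_sq_real u v
    rw [hu, hv, huv] at h; linarith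
  set A := dist a b with hA'
  set B := dist b c with hB'
  set C := dist c a with hC'
  have hA0 : 0 ≤ A := dist_nonneg
  have hB0 : 0 ≤ B := dist_nonneg
  have hC0 : 0 ≤ C := dist_nonneg
  have hA2 : A^2 ≤ 2.97597001 := by nlinarith
  have hB2 : B^2 ≤ 3.01091904 := by nlinarith
  have hC2 : C^2 ≤ 3.01091904 := by nlinarith
  have da : ∀ s t : ℝ, dist (a + (s•u + t•v)) a ^ 2
      = s^2*A^2 + s*t*(A^2+C^2-B^2) + t^2*C^2 := by
    intro s t
    rw [dist_eq_norm, add_sub_cancel_left, norm_combo, hu, hv]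
    linear_combination (s*t) * hg
  have db : ∀ s t : ℝ, dist (a + (s•u + t•v)) b ^ 2
      = (s-1)^2*A^2 + (s-1)*t*(A^2+C^2-B^2) + t^2*C^2 := by
    intro s t
    have hx : a + (s•u + t•v) - b = (s-1)•u + t•v := by
      rw [sub_smul, one_smul, hu', hv']; abel
    rw [dist_eq_norm, hx, norm_combo, hu, hv]
    linear_combination ((s-1)*t) * hg
  have dc : ∀ s t : ℝ, dist (a + (s•u + t•v)) c ^ 2
      = s^2*A^2 + s*(t-1)*(A^2+C^2-B^2) + (t-1)^2*C^2 := by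
    intro s t
    have hx : a + (s•u + t•v) - c = s•u + (t-1)•v := by
      rw [sub_smul, one_smul, hu', hv']; abel
    rw [dist_eq_norm, hx, norm_combo, hu, hv]
    linear_combination (s*(t-1)) * hg
  by_cases h1 : B^2 + C^2 ≤ A^2
  · refine ⟨a + ((1/2 : ℝ)•u + (0:ℝ)•v), ?_, ?_, ?_⟩
    · exact sq_le_one_aux _ dist_nonneg (by rw [da]; linarith)
    · exact sq_le_one_aux _ dist_nonneg (by rw [db]; linarith)
    · exact sq_le_one_aux _ dist_nonneg (by rw [dc]; linarith)
  by_cases h2 : A^2 + C^2 ≤ B^2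
  · refine ⟨a + ((1/2 : ℝ)•u + (1/2:ℝ)•v), ?_, ?_, ?_⟩
    · exact sq_le_one_aux _ dist_nonneg (by rw [da]; linarith)
    · exact sq_le_one_aux _ dist_nonneg (by rw [db]; linarith)
    · exact sq_le_one_aux _ dist_nonneg (by rw [dc]; linarith)
  by_cases h3 : A^2 + B^2 ≤ C^2
  · refine ⟨a + ((0 : ℝ)•u + (1/2:ℝ)•v), ?_, ?_, ?_⟩
    · exact sq_le_one_aux _ dist_nonneg (by rw [da]; linarith)
    · exact sq_le_one_aux _ dist_nonneg (by rw [db]; linarith)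
    · exact sq_le_one_aux _ dist_nonneg (by rw [dc]; linarith)
  push_neg at h1 h2 h3
  have hA2p : 0 < A^2 := by linarith
  have hB2p : 0 < B^2 := by linarith
  have hC2p : 0 < C^2 := by linarith
  have hS : 0 < 2*(A^2*B^2+B^2*C^2+C^2*A^2) - A^4 - B^4 - C^4 := by
    nlinarith [mul_pos hB2p (show (0:ℝ) < A^2+C^2-B^2 by linarith),
      mul_pos hC2p (show (0:ℝ) < A^2+B^2-C^2 by linarith),
      mul_pos hA2p (show (0:ℝ) < B^2+C^2-A^2 by linarith)]
  set S : ℝ := 2*(A^2*B^2+B^2*C^2+C^2*A^2) - A^4 - B^4 - C^4 with hSdef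
  have hcore := hellyCore (B^2+C^2-A^2) (C^2+A^2-B^2) (A^2+B^2-C^2)
    (by linarith) (by linarith) (by linarith) (by linarith) (by linarith) (by linarith)
  have hfin : A^2*B^2*C^2 ≤ S := by rw [hSdef]; nlinarith [hcore]
  refine ⟨a + (((C^2*(A^2+B^2-C^2))/S)•u + ((A^2*(B^2+C^2-A^2))/S)•v), ?_, ?_, ?_⟩
  · refine sq_le_one_aux _ dist_nonneg ?_
    rw [da]
    have : (C^2*(A^2+B^2-C^2)/S)^2*A^2 + (C^2*(A^2+B^2-C^2)/S)*(A^2*(B^2+C^2-A^2)/S)*(A^2+C^2-B^2) + (A^2*(B^2+C^2-A^2)/S)^2*C^2 = A^2*B^2*C^2/S := by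
      field_simp [hS.ne']; rw [hSdef]; ring
    rw [this, div_le_one hS]; exact hfin
  · refine sq_le_one_aux _ dist_nonneg ?_
    rw [db]
    have : (C^2*(A^2+B^2-C^2)/S-1)^2*A^2 + (C^2*(A^2+B^2-C^2)/S-1)*(A^2*(B^2+C^2-A^2)/S)*(A^2+C^2-B^2) + (A^2*(B^2+C^2-A^2)/S)^2*C^2 = A^2*B^2*C^2/S := by
      field_simp [hS.ne']; rw [hSdef]; ring
    rw [this, div_le_one hS]; exact hfin
  · refine sq_le_one_aux _ dist_nonneg ?_
    rw [dc]
    have : (C^2*(A^2+B^2-C^2)/S)^2*A^2 + (C^2*(A^2+B^2-C^2)/S)*(A^2*(B^2+C^2-A^2)/S-1)*(A^2+C^2-B^2) + (A^2*(B^2+C^2-A^2)/S-1)^2*C^2 = A^2*B^2*C^2/S := by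
      field_simp [hS.ne']; rw [hSdef]; ring
    rw [this, div_le_one hS]; exact hfin
lemma midpoint_dists (p q : EuclideanSpace ℝ (Fin 2)) (rp rq : ℝ) (hd : 0 < dist p q)
    (h1 : rp - rq ≤ dist p q) (h2 : rq - rp ≤ dist p q) :
    dist p (p + ((dist p q + rp - rq)/(2*dist p q)) • (q - p)) = (dist p q + rp - rq)/2 ∧
    dist q (p + ((dist p q + rp - rq)/(2*dist p q)) • (q - p)) = (dist p q + rq - rp)/2 := by
  have hne : dist p q ≠ 0 := ne_of_gt hd
  have hnorm : ‖q - p‖ = dist p q := by rw [dist_comm, dist_eq_norm]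
  constructor
  · rw [dist_comm, dist_eq_norm, add_sub_cancel_left, norm_smul, Real.norm_eq_abs,
      abs_of_nonneg (div_nonneg (by linarith) (by linarith)), hnorm]
    field_simp
  · have hx : p + ((dist p q + rp - rq)/(2*dist p q)) • (q - p) - q
        = ((dist p q + rp - rq)/(2*dist p q) - 1) • (q - p) := by
      rw [sub_smul, one_smul]; abel
    rw [dist_comm, dist_eq_norm, hx, norm_smul, Real.norm_eq_abs, hnorm,
      abs_of_nonpos (by
        have : (dist p q + rp - rq)/(2*dist p q) ≤ 1 := by
          rw [div_le_one (by linarith)]; linarith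
        linarith)]
    field_simp; ring

/-- Under the non-Helly triple setup, each lens midpoint has distance in
[0.8625, 0.8675 + ε] to the centers of its two defining disks. -/
theorem stmt_9 (ε : ℝ) (hε0 : 0 ≤ ε) (hε1 : ε ≤ 0.0001)
    (a b c : EuclideanSpace ℝ (Fin 2)) (ra rb rc : ℝ)
    (hra1 : 1 ≤ ra) (hra2 : ra ≤ 1 + ε)
    (hrb1 : 1 ≤ rb) (hrb2 : rb ≤ 1 + ε)
    (hrc1 : 1 ≤ rc) (hrc2 : rc ≤ 1 + ε)
    (hwab : 0.265 ≤ ra + rb - dist a b)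
    (hwbc : 0.265 ≤ rb + rc - dist b c)
    (hwca : 0.265 ≤ rc + ra - dist c a)
    (hnonHelly : ¬ ∃ x : EuclideanSpace ℝ (Fin 2),
      dist x a ≤ ra ∧ dist x b ≤ rb ∧ dist x c ≤ rc)
    (wab wbc wca : EuclideanSpace ℝ (Fin 2))
    (hwabdef : wab = a + ((dist a b + ra - rb) / (2 * dist a b)) • (b - a))
    (hwbcdef : wbc = b + ((dist b c + rb - rc) / (2 * dist b c)) • (c - b))
    (hwcadef : wca = c + ((dist c a + rc - ra) / (2 * dist c a)) • (a - c)) :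
    (0.8625 ≤ dist a wab ∧ dist a wab ≤ 0.8675 + ε) ∧
    (0.8625 ≤ dist b wab ∧ dist b wab ≤ 0.8675 + ε) ∧
    (0.8625 ≤ dist b wbc ∧ dist b wbc ≤ 0.8675 + ε) ∧
    (0.8625 ≤ dist c wbc ∧ dist c wbc ≤ 0.8675 + ε) ∧
    (0.8625 ≤ dist c wca ∧ dist c wca ≤ 0.8675 + ε) ∧
    (0.8625 ≤ dist a wca ∧ dist a wca ≤ 0.8675 + ε) := by
  have hub : dist a b ≤ 1.7352 := by linarith
  have hubc : dist b c ≤ 1.7352 := by linarith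
  have huca : dist c a ≤ 1.7352 := by linarith
  have hlab : 1.7251 < dist a b := by
    by_contra h; push_neg at h
    obtain ⟨x, h1, h2, h3⟩ := helly_point a b c h hubc huca
    exact hnonHelly ⟨x, h1.trans (by linarith), h2.trans (by linarith), h3.trans (by linarith)⟩
  have hlbc : 1.7251 < dist b c := by
    by_contra h; push_neg at h
    obtain ⟨x, h1, h2, h3⟩ := helly_point b c a h huca hub
    exact hnonHelly ⟨x, h3.trans (by linarith), h1.trans (by linarith), h2.trans (by linarith)⟩
  have hlca : 1.7251 < dist c a := by
    by_contra h; push_neg at h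
    obtain ⟨x, h1, h2, h3⟩ := helly_point c a b h hub hubc
    exact hnonHelly ⟨x, h2.trans (by linarith), h3.trans (by linarith), h1.trans (by linarith)⟩
  obtain ⟨e1, e2⟩ := midpoint_dists a b ra rb (by linarith) (by linarith) (by linarith)
  obtain ⟨e3, e4⟩ := midpoint_dists b c rb rc (by linarith) (by linarith) (by linarith)
  obtain ⟨e5, e6⟩ := midpoint_dists c a rc ra (by linarith) (by linarith) (by linarith)
  rw [← hwabdef] at e1 e2
  rw [← hwbcdef] at e3 e4
  rw [← hwcadef] at e5 e6
  rw [e1, e2, e3, e4, e5, e6]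
  refine ⟨⟨by linarith, by linarith⟩, ⟨by linarith, by linarith⟩, ⟨by linarith, by linarith⟩,
    ⟨by linarith, by linarith⟩, ⟨by linarith, by linarith⟩, ⟨by linarith, by linarith⟩⟩
end

section
/- Let p', c, w be points of the Euclidean plane with 0.8625 ≤ dist(c, w) ≤ 0.8676, 1 ≤ dist(p', w) ≤ 1.0001, and suppose the angle ∠(p', c, w) at the vertex c is at most 17.5·π/180 radians. Then dist(p', c) ≥ 1.78. -/
/-- If `0.8625 ≤ dist c w ≤ 0.8676`, `1 ≤ dist p' w ≤ 1.0001`, and the angle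
`∠(p', c, w)` at `c` is at most 17.5°, then `dist p' c ≥ 1.78`. -/
theorem stmt_12 (p' c w : EuclideanSpace ℝ (Fin 2))
    (hcw1 : 0.8625 ≤ dist c w) (hcw2 : dist c w ≤ 0.8676)
    (hpw1 : 1 ≤ dist p' w) (hpw2 : dist p' w ≤ 1.0001)
    (hang : EuclideanGeometry.angle p' c w ≤ 17.5 * Real.pi / 180) :
    1.78 ≤ dist p' c := by
  have hpi : Real.pi ≤ 3.1416 := by
    linarith [Real.pi_lt_d6]
  have hpi0 : 0 ≤ Real.pi := Real.pi_nonneg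
  have hθ0 : 0 ≤ EuclideanGeometry.angle p' c w := EuclideanGeometry.angle_nonneg _ _ _
  have hcos : (0.95 : ℝ) ≤ Real.cos (EuclideanGeometry.angle p' c w) := by
    have h1 : Real.cos (17.5 * Real.pi / 180) ≤ Real.cos (EuclideanGeometry.angle p' c w) := by
      apply Real.cos_le_cos_of_nonneg_of_le_pi hθ0 _ hang
      nlinarith
    have h2 : (0.95 : ℝ) ≤ Real.cos (17.5 * Real.pi / 180) := by
      have := Real.one_sub_sq_div_two_le_cos (x := 17.5 * Real.pi / 180)
      nlinarith
    linarith
  have hlaw := EuclideanGeometry.law_cos p' c w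
  rw [dist_comm w c] at hlaw
  have hx0 : 0 ≤ dist p' c := dist_nonneg
  have ha0 : (0 : ℝ) ≤ dist c w := dist_nonneg
  by_contra h
  push_neg at h
  have hkey : dist p' w * dist p' w ≤
      dist p' c * dist p' c + dist c w * dist c w - 1.9 * dist p' c * dist c w := by
    nlinarith [mul_nonneg hx0 ha0]
  nlinarith [mul_nonneg (sub_nonneg.2 h.le) hx0,
    mul_nonneg (sub_nonneg.2 hcw1) (sub_nonneg.2 h.le), sq_nonneg (dist c w - 0.8625)]
end

section
/- There exist three points a, b, c in the Euclidean plane such that the three closed unit disks (radius 1) centered at a, b, c pairwise intersect with each pairwise lens width 2 − dist at least 0.265 (i.e., 2 − dist(a,b) ≥ 0.265, 2 − dist(b,c) ≥ 0.265, 2 − dist(c,a) ≥ 0.265), yet the three disks have no common point, i.e., there is no point x with dist(x, a) ≤ 1, dist(x, b) ≤ 1 and dist(x, c) ≤ 1. Hence disk arrangements with minimum lens width 0.265 can contain non-Helly triples. -/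
private def pt18 (p q : ℝ) : EuclideanSpace ℝ (Fin 2) := WithLp.toLp 2 ![p, q]

private lemma pt18_dist (p q r u : ℝ) :
    dist (pt18 p q) (pt18 r u) = Real.sqrt ((p - r) ^ 2 + (q - u) ^ 2) := by
  rw [EuclideanSpace.dist_eq, Fin.sum_univ_two]
  simp [pt18, Real.dist_eq, sq_abs]

/-- There exist three unit disks that pairwise intersect with lens widths at
least 0.265 yet have no common point, i.e., they form a non-Helly triple. -/
theorem stmt_18 :
    ∃ a b c : EuclideanSpace ℝ (Fin 2),
      dist a b ≤ 2 ∧ dist b c ≤ 2 ∧ dist c a ≤ 2 ∧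
      0.265 ≤ 2 - dist a b ∧ 0.265 ≤ 2 - dist b c ∧ 0.265 ≤ 2 - dist c a ∧
      ¬ ∃ x : EuclideanSpace ℝ (Fin 2),
        dist x a ≤ 1 ∧ dist x b ≤ 1 ∧ dist x c ≤ 1 := by
  set s : ℝ := 1.735 with hs
  set t : ℝ := Real.sqrt (s ^ 2 * 3 / 4) with htdef
  have ht2 : t ^ 2 = s ^ 2 * 3 / 4 := Real.sq_sqrt (by norm_num [hs])
  refine ⟨pt18 0 0, pt18 s 0, pt18 (s / 2) t, ?_⟩
  have hab : dist (pt18 0 0) (pt18 s 0) = s := by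
    rw [pt18_dist, show ((0:ℝ) - s) ^ 2 + ((0:ℝ) - 0) ^ 2 = s ^ 2 by ring,
      Real.sqrt_sq (by norm_num [hs])]
  have hbc : dist (pt18 s 0) (pt18 (s / 2) t) = s := by
    rw [pt18_dist, show (s - s / 2) ^ 2 + ((0:ℝ) - t) ^ 2 = s ^ 2 by nlinarith [ht2],
      Real.sqrt_sq (by norm_num [hs])]
  have hca : dist (pt18 (s / 2) t) (pt18 0 0) = s := by
    rw [pt18_dist, show (s / 2 - 0) ^ 2 + (t - 0) ^ 2 = s ^ 2 by nlinarith [ht2],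
      Real.sqrt_sq (by norm_num [hs])]
  refine ⟨by rw [hab]; norm_num [hs], by rw [hbc]; norm_num [hs], by rw [hca]; norm_num [hs],
    by rw [hab]; norm_num [hs], by rw [hbc]; norm_num [hs], by rw [hca]; norm_num [hs], ?_⟩
  rintro ⟨x, hxa, hxb, hxc⟩
  have key : ∀ p q : ℝ, dist x (pt18 p q) ≤ 1 →
      (x 0 - p) ^ 2 + (x 1 - q) ^ 2 ≤ 1 := by
    intro p q hy
    have h1 : dist x (pt18 p q) ^ 2 = (x 0 - p) ^ 2 + (x 1 - q) ^ 2 := by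
      rw [EuclideanSpace.dist_eq, Real.sq_sqrt (by positivity), Fin.sum_univ_two]
      simp [pt18, Real.dist_eq, sq_abs]
    nlinarith [dist_nonneg (x := x) (y := pt18 p q)]
  have h1 := key 0 0 hxa
  have h2 := key s 0 hxb
  have h3 := key (s / 2) t hxc
  have ht3 : t ^ 2 = 2.25766875 := by rw [ht2]; norm_num [hs]
  norm_num [hs] at h1 h2 h3
  nlinarith [sq_nonneg (2 * x 0 - 1.735), sq_nonneg (3 * x 1 - t), ht3, h1, h2, h3]
end
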